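/- Let $(\Omega, d)$ be a Polish metric space, $1 \le p \le 2$, and $\mu, \pi \in \mathcal{P}_p(\Omega)$ with $W_\infty(\mu, \pi) < \infty$. Suppose $\mu$ satisfies the defective $p$-transport-entropy inequality $W_p(\nu, \mu) \le \sqrt{2C\,\mathrm{KL}(\nu \| \mu)} + M$ for all $\nu \in \mathcal{P}_p(\Omega)$, with constants $C, M \ge 0$. Then $\pi$ satisfies $W_p(\nu, \pi) \le \sqrt{2C\,\mathrm{KL}(\nu \| \pi)} + M + 2W_\infty(\mu, \pi)$ for all $\nu \in \mathcal{P}_p(\Omega)$. -/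

import Mathlib

open MeasureTheory ProbabilityTheory ENNReal
open scoped Classical

noncomputable section

/-- A coupling of two measures. -/
def IsCoupling {Ω : Type*} [MeasurableSpace Ω] (γ : Measure (Ω × Ω)) (μ ν : Measure Ω) : Prop :=
  γ.map Prod.fst = μ ∧ γ.map Prod.snd = ν

/-- The `p`-Wasserstein distance. -/
noncomputable def Wp {Ω : Type*} [MeasurableSpace Ω] [PseudoMetricSpace Ω]
    (p : ℝ) (μ ν : Measure Ω) : ℝ :=
  sInf {r : ℝ | ∃ γ : Measure (Ω × Ω), IsProbabilityMeasure γ ∧ IsCoupling γ μ ν ∧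
    (∫⁻ z, ENNReal.ofReal (dist z.1 z.2 ^ p) ∂γ) ≠ ⊤ ∧
    r = ((∫⁻ z, ENNReal.ofReal (dist z.1 z.2 ^ p) ∂γ) ^ (1/p)).toReal}

/-- The `∞`-Wasserstein distance. -/
noncomputable def Winf {Ω : Type*} [MeasurableSpace Ω] [PseudoMetricSpace Ω]
    (μ ν : Measure Ω) : ℝ≥0∞ :=
  sInf {r : ℝ≥0∞ | ∃ γ : Measure (Ω × Ω), IsProbabilityMeasure γ ∧ IsCoupling γ μ ν ∧
    r = essSup (fun z => ENNReal.ofReal (dist z.1 z.2)) γ}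

/-- Relative entropy (Kullback--Leibler divergence). -/
noncomputable def KL {Ω : Type*} [MeasurableSpace Ω] (μ ν : Measure Ω) : ℝ≥0∞ :=
  if μ ≪ ν ∧ Integrable (llr μ ν) μ then ENNReal.ofReal (∫ x, llr μ ν x ∂μ) else ⊤

/-- Probability measures with finite `p`-th moment. -/
def MemPp {Ω : Type*} [MeasurableSpace Ω] [PseudoMetricSpace Ω] (p : ℝ) (μ : Measure Ω) : Prop :=
  IsProbabilityMeasure μ ∧ ∃ x₀ : Ω, (∫⁻ x, ENNReal.ofReal (dist x x₀ ^ p) ∂μ) ≠ ⊤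

/-- The defective `p`-transport-entropy inequality `T_p(A, B)`. -/
def DefTp {Ω : Type*} [MeasurableSpace Ω] [PseudoMetricSpace Ω]
    (p A B : ℝ) (π : Measure Ω) : Prop :=
  ∀ ν : Measure Ω, MemPp p ν → KL ν π ≠ ⊤ →
    Wp p ν π ≤ Real.sqrt (2 * A * (KL ν π).toReal) + B

/-- One step of a Markov kernel acting on a measure. -/
noncomputable def stepK {Ω : Type*} [MeasurableSpace Ω] (P : Kernel Ω Ω) (μ : Measure Ω) :
    Measure Ω :=
  μ.bind (fun x => P x)

/-- `N`-fold iterate of a Markov kernel acting on a measure. -/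
noncomputable def iterK {Ω : Type*} [MeasurableSpace Ω] (P : Kernel Ω Ω) (μ : Measure Ω) :
    ℕ → Measure Ω
  | 0 => μ
  | (N + 1) => stepK P (iterK P μ N)

/-- Total variation distance. -/
noncomputable def tvDist {Ω : Type*} [MeasurableSpace Ω] (μ ν : Measure Ω) : ℝ :=
  sSup {r : ℝ | ∃ A : Set Ω, MeasurableSet A ∧ r = |(μ A).toReal - (ν A).toReal|}

end


section Helpers
variable {Ω : Type*} [MeasurableSpace Ω] [PseudoMetricSpace Ω]

noncomputable def cost (p : ℝ) (γ : Measure (Ω × Ω)) : ℝ≥0∞ :=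
  ∫⁻ z, ENNReal.ofReal (dist z.1 z.2 ^ p) ∂γ

lemma cost_eq {p : ℝ} (hp : 0 ≤ p) (γ : Measure (Ω × Ω)) :
    cost p γ = ∫⁻ (z : Ω × Ω), (ENNReal.ofReal (dist z.1 z.2)) ^ p ∂γ := by
  unfold cost
  refine lintegral_congr fun z => ?_
  exact (ENNReal.ofReal_rpow_of_nonneg (dist_nonneg (x := z.1) (y := z.2)) hp).symm

-- Minkowski composite
lemma minkowski_three {α : Type*} [MeasurableSpace α] {p : ℝ} (hp : 1 ≤ p)
    (ρ : Measure α) {f g h : α → ℝ≥0∞} (hf : AEMeasurable f ρ) (hg : AEMeasurable g ρ)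
    (hfg : ∀ᵐ x ∂ρ, h x ≤ f x + g x) :
    (∫⁻ x, h x ^ p ∂ρ) ^ (1/p) ≤ (∫⁻ x, f x ^ p ∂ρ) ^ (1/p) + (∫⁻ x, g x ^ p ∂ρ) ^ (1/p) := by
  refine le_trans ?_ (ENNReal.lintegral_Lp_add_le hf hg hp)
  refine ENNReal.rpow_le_rpow ?_ (by positivity)
  refine lintegral_mono_ae ?_
  filter_upwards [hfg] with x hx
  exact ENNReal.rpow_le_rpow hx (le_trans zero_le_one hp)

lemma measurable_costInt {Ω : Type*} [MeasurableSpace Ω] [PseudoMetricSpace Ω]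
    [SecondCountableTopology Ω] [OpensMeasurableSpace Ω] (p : ℝ) :
    Measurable (fun z : Ω × Ω => ENNReal.ofReal (dist z.1 z.2) ^ p) :=
  (measurable_dist.ennreal_ofReal).pow_const p

lemma glue {Ω : Type*} [MeasurableSpace Ω] [MetricSpace Ω] [BorelSpace Ω] [PolishSpace Ω]
    [Nonempty Ω] {p : ℝ} (hp : 1 ≤ p) {a b c : Measure Ω}
    {γ₁ γ₂ : Measure (Ω × Ω)} (h1 : IsProbabilityMeasure γ₁) (h2 : IsProbabilityMeasure γ₂)
    (hc1 : IsCoupling γ₁ a b) (hc2 : IsCoupling γ₂ b c) :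
    ∃ γ₃ : Measure (Ω × Ω), IsProbabilityMeasure γ₃ ∧ IsCoupling γ₃ a c ∧
      (cost p γ₃) ^ (1/p) ≤ (cost p γ₁) ^ (1/p) + (cost p γ₂) ^ (1/p) := by
  haveI := h1; haveI := h2
  have hp0 : (0:ℝ) ≤ p := le_trans zero_le_one hp
  set γ₁' : Measure (Ω × Ω) := γ₁.map Prod.swap with hγ₁'
  haveI : IsProbabilityMeasure γ₁' := Measure.isProbabilityMeasure_map measurable_swap.aemeasurable
  haveI : IsProbabilityMeasure b := hc1.2 ▸ Measure.isProbabilityMeasure_map measurable_snd.aemeasurable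
  have hfst1 : γ₁'.fst = b := by
    rw [hγ₁', Measure.fst_map_swap]
    exact hc1.2
  have hfst2 : γ₂.fst = b := hc2.1
  set κ₁ := γ₁'.condKernel with hκ₁
  set κ₂ := γ₂.condKernel with hκ₂
  have hdis1 : b ⊗ₘ κ₁ = γ₁' := by rw [hκ₁, ← hfst1]; exact γ₁'.disintegrate γ₁'.condKernel
  have hdis2 : b ⊗ₘ κ₂ = γ₂ := by rw [hκ₂, ← hfst2]; exact γ₂.disintegrate γ₂.condKernel
  set ρ : Measure (Ω × (Ω × Ω)) := b ⊗ₘ (κ₁ ×ₖ κ₂) with hρ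
  haveI : IsProbabilityMeasure ρ := by infer_instance
  refine ⟨ρ.map Prod.snd, Measure.isProbabilityMeasure_map measurable_snd.aemeasurable, ⟨?_, ?_⟩, ?_⟩
  · -- first marginal is a
    ext s hs
    rw [Measure.map_apply measurable_fst hs,
      Measure.map_apply measurable_snd (measurable_fst hs),
      Measure.compProd_apply (measurable_snd (measurable_fst hs))]
    have huniv : ∀ y : Ω, (κ₁ ×ₖ κ₂) y (Prod.mk y ⁻¹' (Prod.snd ⁻¹' (Prod.fst ⁻¹' s)))
        = κ₁ y s := by
      intro y
      have : (Prod.mk y ⁻¹' (Prod.snd ⁻¹' (Prod.fst ⁻¹' s)) : Set (Ω × Ω))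
          = s ×ˢ Set.univ := by ext q; simp
      rw [this, Kernel.prod_apply, Measure.prod_prod, measure_univ, mul_one]
    simp_rw [huniv]
    have : a s = γ₁' (Prod.snd ⁻¹' s) := by
      rw [hγ₁', Measure.map_apply measurable_swap (measurable_snd hs),
        ← hc1.1, Measure.map_apply measurable_fst hs]
      rfl
    rw [this, ← hdis1, Measure.compProd_apply (measurable_snd hs)]
    exact lintegral_congr fun y => by congr 1
  · -- second marginal is c
    ext s hs
    rw [Measure.map_apply measurable_snd hs,
      Measure.map_apply measurable_snd (measurable_snd hs),
      Measure.compProd_apply (measurable_snd (measurable_snd hs))]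
    have huniv : ∀ y : Ω, (κ₁ ×ₖ κ₂) y (Prod.mk y ⁻¹' (Prod.snd ⁻¹' (Prod.snd ⁻¹' s)))
        = κ₂ y s := by
      intro y
      have : (Prod.mk y ⁻¹' (Prod.snd ⁻¹' (Prod.snd ⁻¹' s)) : Set (Ω × Ω))
          = Set.univ ×ˢ s := by ext q; simp
      rw [this, Kernel.prod_apply, Measure.prod_prod, measure_univ, one_mul]
    simp_rw [huniv]
    have : c s = γ₂ (Prod.snd ⁻¹' s) := by
      rw [← hc2.2, Measure.map_apply measurable_snd hs]
    rw [this, ← hdis2, Measure.compProd_apply (measurable_snd hs)]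
    exact lintegral_congr fun y => by congr 1
  · -- cost bound
    rw [cost_eq hp0, cost_eq hp0, cost_eq hp0]
    rw [lintegral_map (measurable_costInt p) measurable_snd]
    set F : Ω × (Ω × Ω) → ℝ≥0∞ := fun w => ENNReal.ofReal (dist w.2.1 w.1) with hF
    set G : Ω × (Ω × Ω) → ℝ≥0∞ := fun w => ENNReal.ofReal (dist w.1 w.2.2) with hG
    have hFm : Measurable F := (measurable_dist.comp
      ((measurable_fst.comp measurable_snd).prodMk measurable_fst)).ennreal_ofReal
    have hGm : Measurable G := (measurable_dist.comp
      (measurable_fst.prodMk (measurable_snd.comp measurable_snd))).ennreal_ofReal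
    have key := minkowski_three hp ρ hFm.aemeasurable hGm.aemeasurable
      (f := F) (g := G) (h := fun w => ENNReal.ofReal (dist w.2.1 w.2.2))
      (Filter.Eventually.of_forall (fun w => by
        rw [hF, hG]
        calc ENNReal.ofReal (dist w.2.1 w.2.2)
            ≤ ENNReal.ofReal (dist w.2.1 w.1 + dist w.1 w.2.2) :=
              ENNReal.ofReal_le_ofReal (dist_triangle _ _ _)
          _ = _ := ENNReal.ofReal_add dist_nonneg dist_nonneg))
    refine le_trans key ?_
    have hint1 : ∫⁻ w, F w ^ p ∂ρ = ∫⁻ z : Ω × Ω, ENNReal.ofReal (dist z.1 z.2) ^ p ∂γ₁ := by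
      rw [hρ, Measure.lintegral_compProd (hFm.pow_const p)]
      have h1 : ∀ y : Ω, ∫⁻ q : Ω × Ω, ENNReal.ofReal (dist q.1 y) ^ p ∂((κ₁ ×ₖ κ₂) y)
          = ∫⁻ x, ENNReal.ofReal (dist x y) ^ p ∂(κ₁ y) := by
        intro y
        have hm : Measurable fun q : Ω × Ω => ENNReal.ofReal (dist q.1 y) ^ p :=
          ((measurable_fst.dist measurable_const).ennreal_ofReal).pow_const p
        rw [Kernel.prod_apply, lintegral_prod _ hm.aemeasurable]
        simp
      have h2 : Measurable fun z : Ω × Ω => ENNReal.ofReal (dist z.2 z.1) ^ p :=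
        ((measurable_snd.dist measurable_fst).ennreal_ofReal).pow_const p
      calc ∫⁻ y, ∫⁻ q : Ω × Ω, F (y, q) ^ p ∂((κ₁ ×ₖ κ₂) y) ∂b
          = ∫⁻ y, ∫⁻ x, ENNReal.ofReal (dist x y) ^ p ∂(κ₁ y) ∂b := by
            refine lintegral_congr fun y => ?_; rw [hF]; exact h1 y
        _ = ∫⁻ z : Ω × Ω, ENNReal.ofReal (dist z.2 z.1) ^ p ∂(b ⊗ₘ κ₁) := by
            rw [Measure.lintegral_compProd h2]
        _ = ∫⁻ z : Ω × Ω, ENNReal.ofReal (dist z.2 z.1) ^ p ∂γ₁' := by rw [hdis1]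
        _ = ∫⁻ z : Ω × Ω, ENNReal.ofReal (dist z.1 z.2) ^ p ∂γ₁ := by
            rw [hγ₁', lintegral_map h2 measurable_swap]
            exact lintegral_congr fun z => by simp [dist_comm]
    have hint2 : ∫⁻ w, G w ^ p ∂ρ = ∫⁻ z : Ω × Ω, ENNReal.ofReal (dist z.1 z.2) ^ p ∂γ₂ := by
      rw [hρ, Measure.lintegral_compProd (hGm.pow_const p)]
      have h1 : ∀ y : Ω, ∫⁻ q : Ω × Ω, ENNReal.ofReal (dist y q.2) ^ p ∂((κ₁ ×ₖ κ₂) y)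
          = ∫⁻ x, ENNReal.ofReal (dist y x) ^ p ∂(κ₂ y) := by
        intro y
        have hm : Measurable fun q : Ω × Ω => ENNReal.ofReal (dist y q.2) ^ p :=
          ((measurable_const.dist measurable_snd).ennreal_ofReal).pow_const p
        rw [Kernel.prod_apply, lintegral_prod _ hm.aemeasurable]
        simp
      calc ∫⁻ y, ∫⁻ q : Ω × Ω, G (y, q) ^ p ∂((κ₁ ×ₖ κ₂) y) ∂b
          = ∫⁻ y, ∫⁻ x, ENNReal.ofReal (dist y x) ^ p ∂(κ₂ y) ∂b := by
            refine lintegral_congr fun y => ?_; rw [hG]; exact h1 y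
        _ = ∫⁻ z : Ω × Ω, ENNReal.ofReal (dist z.1 z.2) ^ p ∂(b ⊗ₘ κ₂) := by
            rw [Measure.lintegral_compProd (measurable_costInt p)]
        _ = ∫⁻ z : Ω × Ω, ENNReal.ofReal (dist z.1 z.2) ^ p ∂γ₂ := by rw [hdis2]
    rw [hint1, hint2]

lemma ofReal_dist_rpow {Ω : Type*} [PseudoMetricSpace Ω] {p : ℝ} (hp0 : 0 ≤ p) (a b : Ω) :
    ENNReal.ofReal (dist a b ^ p) = ENNReal.ofReal (dist a b) ^ p :=
  (ENNReal.ofReal_rpow_of_nonneg dist_nonneg hp0).symm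

noncomputable def Mom (p : ℝ) (a : Measure Ω) (x₀ : Ω) : ℝ≥0∞ := ∫⁻ x, ENNReal.ofReal (dist x x₀ ^ p) ∂a

lemma mom_eq {p : ℝ} (hp0 : 0 ≤ p) (a : Measure Ω) (x₀ : Ω) :
    Mom p a x₀ = ∫⁻ x, ENNReal.ofReal (dist x x₀) ^ p ∂a :=
  lintegral_congr fun x => ofReal_dist_rpow hp0 x x₀

lemma rpow_inv_ne_top {p : ℝ} (hp : 1 ≤ p) {x : ℝ≥0∞} (hx : x ≠ ⊤) : x ^ (1/p) ≠ ⊤ := by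
  have : (0:ℝ) ≤ 1/p := by positivity
  exact (ENNReal.rpow_lt_top_of_nonneg this hx).ne

lemma ne_top_of_rpow_inv {p : ℝ} (hp : 1 ≤ p) {x : ℝ≥0∞} (hx : x ^ (1/p) ≠ ⊤) : x ≠ ⊤ := by
  intro h
  rw [h] at hx
  have hppos : (0:ℝ) < 1/p := by positivity
  rw [ENNReal.top_rpow_of_pos hppos] at hx
  exact hx rfl

section metricaux
variable {Ω : Type*} [MeasurableSpace Ω] [MetricSpace Ω] [BorelSpace Ω] [SecondCountableTopology Ω]

lemma cost_le_of_essSup {p : ℝ} (hp0 : 0 ≤ p) (γ : Measure (Ω × Ω)) [IsProbabilityMeasure γ]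
    {E : ℝ≥0∞} (h : essSup (fun z : Ω × Ω => ENNReal.ofReal (dist z.1 z.2)) γ ≤ E) :
    cost p γ ≤ E ^ p := by
  rw [cost_eq hp0]
  calc ∫⁻ z : Ω × Ω, ENNReal.ofReal (dist z.1 z.2) ^ p ∂γ
      ≤ ∫⁻ _ : Ω × Ω, E ^ p ∂γ := by
        refine lintegral_mono_ae ?_
        filter_upwards [ae_le_essSup (fun z : Ω × Ω => ENNReal.ofReal (dist z.1 z.2))] with z hz
        exact ENNReal.rpow_le_rpow (le_trans hz h) hp0
    _ = E ^ p := by simp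

lemma mom_of_coupling {p : ℝ} (hp : 1 ≤ p) {a b : Measure Ω} {γ : Measure (Ω × Ω)}
    [IsProbabilityMeasure γ] (hcoup : IsCoupling γ a b) (hcost : cost p γ ≠ ⊤) (x₀ : Ω)
    (ha : Mom p a x₀ ≠ ⊤) : Mom p b x₀ ≠ ⊤ := by
  have hp0 : (0:ℝ) ≤ p := le_trans zero_le_one hp
  have hmx : Measurable fun x : Ω => ENNReal.ofReal (dist x x₀) ^ p :=
    ((measurable_id.dist measurable_const)).ennreal_ofReal.pow_const p
  have hb : Mom p b x₀ = ∫⁻ z : Ω × Ω, ENNReal.ofReal (dist z.2 x₀) ^ p ∂γ := by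
    rw [mom_eq hp0, ← hcoup.2, lintegral_map hmx measurable_snd]
  have key := minkowski_three hp γ
    (f := fun z : Ω × Ω => ENNReal.ofReal (dist z.2 z.1))
    (g := fun z : Ω × Ω => ENNReal.ofReal (dist z.1 x₀))
    (h := fun z : Ω × Ω => ENNReal.ofReal (dist z.2 x₀))
    ((measurable_snd.dist measurable_fst)).ennreal_ofReal.aemeasurable
    ((measurable_fst.dist measurable_const)).ennreal_ofReal.aemeasurable
    (Filter.Eventually.of_forall (fun z => by
      calc ENNReal.ofReal (dist z.2 x₀)
          ≤ ENNReal.ofReal (dist z.2 z.1 + dist z.1 x₀) :=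
            ENNReal.ofReal_le_ofReal (dist_triangle _ _ _)
        _ = _ := ENNReal.ofReal_add dist_nonneg dist_nonneg))
  have h1 : ∫⁻ z : Ω × Ω, ENNReal.ofReal (dist z.2 z.1) ^ p ∂γ = cost p γ := by
    rw [cost_eq hp0]
    exact lintegral_congr fun z => by rw [dist_comm]
  have h2 : ∫⁻ z : Ω × Ω, ENNReal.ofReal (dist z.1 x₀) ^ p ∂γ = Mom p a x₀ := by
    rw [mom_eq hp0, ← hcoup.1, lintegral_map hmx measurable_fst]
  rw [h1, h2] at key
  have : (∫⁻ z : Ω × Ω, ENNReal.ofReal (dist z.2 x₀) ^ p ∂γ) ^ (1/p) ≠ ⊤ := by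
    refine ne_top_of_le_ne_top ?_ key
    exact ENNReal.add_ne_top.mpr ⟨rpow_inv_ne_top hp hcost, rpow_inv_ne_top hp ha⟩
  rw [hb, mom_eq hp0] at *
  exact ne_top_of_rpow_inv hp this

lemma mom_point {p : ℝ} (hp : 1 ≤ p) {a : Measure Ω} [IsProbabilityMeasure a] {x₀ : Ω} (x₁ : Ω)
    (ha : Mom p a x₀ ≠ ⊤) : Mom p a x₁ ≠ ⊤ := by
  have hp0 : (0:ℝ) ≤ p := le_trans zero_le_one hp
  have key := minkowski_three hp a
    (f := fun x : Ω => ENNReal.ofReal (dist x x₀))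
    (g := fun _ : Ω => ENNReal.ofReal (dist x₀ x₁))
    (h := fun x : Ω => ENNReal.ofReal (dist x x₁))
    ((measurable_id.dist measurable_const)).ennreal_ofReal.aemeasurable
    aemeasurable_const
    (Filter.Eventually.of_forall (fun x => by
      calc ENNReal.ofReal (dist x x₁)
          ≤ ENNReal.ofReal (dist x x₀ + dist x₀ x₁) :=
            ENNReal.ofReal_le_ofReal (dist_triangle _ _ _)
        _ = _ := ENNReal.ofReal_add dist_nonneg dist_nonneg))
  rw [mom_eq hp0]
  refine ne_top_of_rpow_inv hp (ne_top_of_le_ne_top ?_ key)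
  refine ENNReal.add_ne_top.mpr ⟨rpow_inv_ne_top hp (by rwa [mom_eq hp0] at ha), ?_⟩
  refine rpow_inv_ne_top hp ?_
  simp only [lintegral_const, measure_univ, mul_one]
  exact (ENNReal.rpow_lt_top_of_nonneg hp0 ENNReal.ofReal_ne_top).ne

lemma prod_coupling {p : ℝ} (hp : 1 ≤ p) {a b : Measure Ω} [IsProbabilityMeasure a]
    [IsProbabilityMeasure b] (x₀ : Ω) (ha : Mom p a x₀ ≠ ⊤) (hb : Mom p b x₀ ≠ ⊤) :
    ∃ γ : Measure (Ω × Ω), IsProbabilityMeasure γ ∧ IsCoupling γ a b ∧ cost p γ ≠ ⊤ := by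
  have hp0 : (0:ℝ) ≤ p := le_trans zero_le_one hp
  refine ⟨a.prod b, by infer_instance, ⟨?_, ?_⟩, ?_⟩
  · exact Measure.fst_prod
  · exact Measure.snd_prod
  · have key := minkowski_three hp (a.prod b)
      (f := fun z : Ω × Ω => ENNReal.ofReal (dist z.1 x₀))
      (g := fun z : Ω × Ω => ENNReal.ofReal (dist x₀ z.2))
      (h := fun z : Ω × Ω => ENNReal.ofReal (dist z.1 z.2))
      ((measurable_fst.dist measurable_const)).ennreal_ofReal.aemeasurable
      ((measurable_const.dist measurable_snd)).ennreal_ofReal.aemeasurable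
      (Filter.Eventually.of_forall (fun z => by
        calc ENNReal.ofReal (dist z.1 z.2)
            ≤ ENNReal.ofReal (dist z.1 x₀ + dist x₀ z.2) :=
              ENNReal.ofReal_le_ofReal (dist_triangle _ _ _)
          _ = _ := ENNReal.ofReal_add dist_nonneg dist_nonneg))
  -- ∫ f^p over prod = Mom a, ∫ g^p = Mom b
    have h1 : ∫⁻ z : Ω × Ω, ENNReal.ofReal (dist z.1 x₀) ^ p ∂(a.prod b) = Mom p a x₀ := by
      have hm : Measurable fun z : Ω × Ω => ENNReal.ofReal (dist z.1 x₀) ^ p :=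
        ((measurable_fst.dist measurable_const)).ennreal_ofReal.pow_const p
      rw [mom_eq hp0, lintegral_prod _ hm.aemeasurable]
      simp
    have h2 : ∫⁻ z : Ω × Ω, ENNReal.ofReal (dist x₀ z.2) ^ p ∂(a.prod b) = Mom p b x₀ := by
      have hm : Measurable fun z : Ω × Ω => ENNReal.ofReal (dist x₀ z.2) ^ p :=
        ((measurable_const.dist measurable_snd)).ennreal_ofReal.pow_const p
      rw [mom_eq hp0, lintegral_prod _ hm.aemeasurable]
      simp [dist_comm]
    rw [h1, h2] at key
    rw [cost_eq hp0]
    refine ne_top_of_rpow_inv hp (ne_top_of_le_ne_top ?_ key)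
    exact ENNReal.add_ne_top.mpr ⟨rpow_inv_ne_top hp ha, rpow_inv_ne_top hp hb⟩
end metricaux

section wp
variable {Ω : Type*} [MeasurableSpace Ω] [MetricSpace Ω]

def WpSet (p : ℝ) (μ ν : Measure Ω) : Set ℝ :=
  {r : ℝ | ∃ γ : Measure (Ω × Ω), IsProbabilityMeasure γ ∧ IsCoupling γ μ ν ∧
    (∫⁻ z, ENNReal.ofReal (dist z.1 z.2 ^ p) ∂γ) ≠ ⊤ ∧
    r = ((∫⁻ z, ENNReal.ofReal (dist z.1 z.2 ^ p) ∂γ) ^ (1/p)).toReal}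

lemma wpSet_bddBelow (p : ℝ) (μ ν : Measure Ω) : BddBelow (WpSet p μ ν) := by
  refine ⟨0, fun r hr => ?_⟩
  obtain ⟨γ, _, _, _, hr⟩ := hr
  rw [hr]
  exact ENNReal.toReal_nonneg

lemma wp_le_of_coupling (p : ℝ) {μ ν : Measure Ω} {γ : Measure (Ω × Ω)}
    (hγ : IsProbabilityMeasure γ) (hc : IsCoupling γ μ ν) (hfin : cost p γ ≠ ⊤) :
    sInf (WpSet p μ ν) ≤ ((cost p γ) ^ (1/p)).toReal :=
  csInf_le (wpSet_bddBelow p μ ν) ⟨γ, hγ, hc, hfin, rfl⟩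

lemma wp_near {p : ℝ} {μ ν : Measure Ω} (hne : (WpSet p μ ν).Nonempty) {ε : ℝ} (hε : 0 < ε) :
    ∃ γ : Measure (Ω × Ω), IsProbabilityMeasure γ ∧ IsCoupling γ μ ν ∧ cost p γ ≠ ⊤ ∧
      ((cost p γ) ^ (1/p)).toReal < sInf (WpSet p μ ν) + ε := by
  obtain ⟨r, hr, hrlt⟩ := Real.lt_sInf_add_pos hne hε
  obtain ⟨γ, hγ, hc, hfin, rfl⟩ := hr
  exact ⟨γ, hγ, hc, hfin, hrlt⟩

lemma winf_near {μ ν : Measure Ω} (h : sInf {r : ℝ≥0∞ | ∃ γ : Measure (Ω × Ω),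
      IsProbabilityMeasure γ ∧ IsCoupling γ μ ν ∧
      r = essSup (fun z => ENNReal.ofReal (dist z.1 z.2)) γ} ≠ ⊤) {ε : ℝ} (hε : 0 < ε) :
    ∃ γ : Measure (Ω × Ω), IsProbabilityMeasure γ ∧ IsCoupling γ μ ν ∧
      essSup (fun z : Ω × Ω => ENNReal.ofReal (dist z.1 z.2)) γ ≤
        sInf {r : ℝ≥0∞ | ∃ γ : Measure (Ω × Ω), IsProbabilityMeasure γ ∧ IsCoupling γ μ ν ∧
          r = essSup (fun z => ENNReal.ofReal (dist z.1 z.2)) γ} + ENNReal.ofReal ε := by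
  set S := {r : ℝ≥0∞ | ∃ γ : Measure (Ω × Ω), IsProbabilityMeasure γ ∧ IsCoupling γ μ ν ∧
      r = essSup (fun z => ENNReal.ofReal (dist z.1 z.2)) γ} with hS
  have hlt : sInf S < sInf S + ENNReal.ofReal ε := by
    refine ENNReal.lt_add_right h ?_
    simp [hε, ENNReal.ofReal_eq_zero, not_le]
  obtain ⟨r, hr, hrlt⟩ := sInf_lt_iff.mp hlt
  obtain ⟨γ, hγ, hc, rfl⟩ := hr
  exact ⟨γ, hγ, hc, hrlt.le⟩
end wp

-- real pointwise key inequality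
lemma real_key {u v : ℝ} (hu : 0 ≤ u) (hv : 0 ≤ v) (hz : v = 0 → u = 0) :
    u * Real.log v ≤ Real.log u * u - u + v := by
  rcases eq_or_lt_of_le hu with h0 | hupos
  · simp [← h0, hv]
  · have hvpos : 0 < v := by
      rcases eq_or_lt_of_le hv with h0' | h; · exact absurd (hz h0'.symm) (ne_of_gt hupos).symm.symm
      · exact h
    have hlog := Real.log_le_sub_one_of_pos (div_pos hvpos hupos)
    rw [Real.log_div (ne_of_gt hvpos) (ne_of_gt hupos)] at hlog
    have := mul_le_mul_of_nonneg_left hlog (le_of_lt hupos)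
    have hdiv : u * (v / u - 1) = v - u := by field_simp
    nlinarith

lemma ofReal_abs_le (a : ℝ) : ENNReal.ofReal |a| ≤ ENNReal.ofReal a + ENNReal.ofReal (-a) := by
  rcases le_total 0 a with h | h
  · rw [abs_of_nonneg h]; exact le_self_add
  · rw [abs_of_nonpos h]; exact le_add_self

lemma ofReal_neg_log_le {t : ℝ} (ht : 0 ≤ t) :
    ENNReal.ofReal (-Real.log t) ≤ ENNReal.ofReal (1 / t) := by
  rcases eq_or_lt_of_le ht with h0 | hpos
  · simp [← h0]
  · refine ENNReal.ofReal_le_ofReal ?_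
    have := Real.log_le_sub_one_of_pos (show (0:ℝ) < 1/t by positivity)
    rw [Real.log_div one_ne_zero (ne_of_gt hpos), Real.log_one, zero_sub] at this
    have htinv : (0:ℝ) < 1/t := by positivity
    linarith

lemma ennreal_mul_ofReal_le {a : ℝ≥0∞} (ha : a ≠ ⊤) (s : ℝ) :
    a * ENNReal.ofReal s ≤ ENNReal.ofReal (a.toReal * s) + a * ENNReal.ofReal (-s) := by
  rcases le_total 0 s with h | h
  · have : ENNReal.ofReal (a.toReal * s) = a * ENNReal.ofReal s := by
      rw [ENNReal.ofReal_mul ENNReal.toReal_nonneg, ENNReal.ofReal_toReal ha]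
    rw [this]
    exact le_self_add
  · have : ENNReal.ofReal s = 0 := by simp [ENNReal.ofReal_eq_zero, h]
    simp [this]

lemma kl_marginal {Ω : Type*} [MeasurableSpace Ω] {ν π μ : Measure Ω} {γ : Measure (Ω × Ω)}
    [IsProbabilityMeasure ν] [IsProbabilityMeasure π] [IsProbabilityMeasure μ]
    [IsProbabilityMeasure γ]
    (hfst : γ.map Prod.fst = π) (hsnd : γ.map Prod.snd = μ)
    (hac : ν ≪ π) (hint : Integrable (llr ν π) ν) :
    IsProbabilityMeasure (γ.withDensity (fun z => ν.rnDeriv π z.1)) ∧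
    (γ.withDensity (fun z => ν.rnDeriv π z.1)).map Prod.fst = ν ∧
    ((γ.withDensity (fun z => ν.rnDeriv π z.1)).map Prod.snd ≪ μ) ∧
    Integrable (llr ((γ.withDensity (fun z => ν.rnDeriv π z.1)).map Prod.snd) μ)
      ((γ.withDensity (fun z => ν.rnDeriv π z.1)).map Prod.snd) ∧
    ∫ y, llr ((γ.withDensity (fun z => ν.rnDeriv π z.1)).map Prod.snd) μ y
        ∂((γ.withDensity (fun z => ν.rnDeriv π z.1)).map Prod.snd) ≤ ∫ x, llr ν π x ∂ν := by
  set f := ν.rnDeriv π with hf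
  have hfm : Measurable f := Measure.measurable_rnDeriv ν π
  have hwd : π.withDensity f = ν := Measure.withDensity_rnDeriv_eq ν π hac
  have hffin : ∀ᵐ x ∂π, f x < ⊤ := Measure.rnDeriv_lt_top ν π
  set γν : Measure (Ω × Ω) := γ.withDensity (fun z => f z.1) with hγν
  have hγνγ : γν ≪ γ := withDensity_absolutelyContinuous _ _
  have hγνfst : γν.map Prod.fst = ν := by
    ext s hs
    rw [Measure.map_apply measurable_fst hs, hγν, withDensity_apply _ (measurable_fst hs),
      ← hwd, withDensity_apply _ hs, ← hfst, setLIntegral_map hs hfm measurable_fst]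
  haveI hγνprob : IsProbabilityMeasure γν := by
    constructor
    have h1 : (γν.map Prod.fst) Set.univ = γν Set.univ := by
      rw [Measure.map_apply measurable_fst MeasurableSet.univ, Set.preimage_univ]
    rw [← h1, hγνfst, measure_univ]
  set ντ : Measure Ω := γν.map Prod.snd with hντ
  haveI : IsProbabilityMeasure ντ := Measure.isProbabilityMeasure_map measurable_snd.aemeasurable
  have hacτ : ντ ≪ μ := by
    refine Measure.AbsolutelyContinuous.mk fun s hs h0 => ?_
    have h1 : γ (Prod.snd ⁻¹' s) = 0 := by
      rw [← Measure.map_apply measurable_snd hs, hsnd]; exact h0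
    rw [hντ, Measure.map_apply measurable_snd hs]
    exact hγνγ h1
  set g := ντ.rnDeriv μ with hg
  have hgm : Measurable g := Measure.measurable_rnDeriv ντ μ
  have hgwd : μ.withDensity g = ντ := Measure.withDensity_rnDeriv_eq ντ μ hacτ
  have hgfin : ∀ᵐ y ∂μ, g y < ⊤ := Measure.rnDeriv_lt_top ντ μ
  -- lintegral transfer
  have T1 : ∀ h : Ω → ℝ≥0∞, Measurable h →
      ∫⁻ y, h y ∂ντ = ∫⁻ z : Ω × Ω, f z.1 * h z.2 ∂γ := by
    intro h hm
    have hfm1 : Measurable fun z : Ω × Ω => f z.1 := hfm.comp measurable_fst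
    have hm2 : Measurable fun z : Ω × Ω => h z.2 := hm.comp measurable_snd
    rw [hντ, lintegral_map hm measurable_snd, hγν,
      lintegral_withDensity_eq_lintegral_mul γ hfm1 hm2]
    exact lintegral_congr fun z => rfl
  -- a.e. facts on γ
  have hfae : ∀ᵐ z : Ω × Ω ∂γ, f z.1 < ⊤ := by
    rw [← hfst] at hffin
    exact (ae_map_iff measurable_fst.aemeasurable
      (measurableSet_lt hfm measurable_const)).mp hffin
  have hgae : ∀ᵐ z : Ω × Ω ∂γ, g z.2 < ⊤ := by
    rw [← hsnd] at hgfin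
    exact (ae_map_iff measurable_snd.aemeasurable
      (measurableSet_lt hgm measurable_const)).mp hgfin
  have hzero : ∀ᵐ z : Ω × Ω ∂γ, g z.2 = 0 → f z.1 = 0 := by
    have hset : MeasurableSet {y | g y = 0} := hgm (measurableSet_singleton 0)
    have h0 : ντ {y | g y = 0} = 0 := by
      rw [← hgwd, withDensity_apply _ hset]
      rw [setLIntegral_congr_fun hset (show Set.EqOn g 0 {y | g y = 0} from fun y hy => hy)]
      simp
    have h2 : γν (Prod.snd ⁻¹' {y | g y = 0}) = 0 := by
      rw [hντ, Measure.map_apply measurable_snd hset] at h0; exact h0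
    rw [hγν, withDensity_apply _ (measurable_snd hset)] at h2
    have h3 := (setLIntegral_eq_zero_iff (measurable_snd hset)
      (hfm.comp measurable_fst)).mp h2
    filter_upwards [h3] with z hz hgz
    exact hz hgz
  -- Step 1
  have hInt1 : Integrable (fun x => Real.log ((f x).toReal) * (f x).toReal) π := by
    have h : Integrable (fun x => Real.log ((f x).toReal)) (π.withDensity f) := by
      rw [hwd]; exact hint
    rw [integrable_withDensity_iff hfm hffin] at h
    exact h
  have hA : ∫ x, llr ν π x ∂ν = ∫ x, Real.log ((f x).toReal) * (f x).toReal ∂π := by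
    have hwd' : π.withDensity f = π.withDensity (fun x => ((f x).toNNReal : ℝ≥0∞)) :=
      withDensity_congr_ae (hffin.mono fun x hx => (ENNReal.coe_toNNReal hx.ne).symm)
    have h1 : ∫ x, llr ν π x ∂ν = ∫ x, Real.log ((f x).toReal) ∂(π.withDensity f) := by
      rw [hwd]; rfl
    rw [h1, hwd', integral_withDensity_eq_integral_smul hfm.ennreal_toNNReal
      (fun x => Real.log ((f x).toReal))]
    refine integral_congr_ae (Filter.Eventually.of_forall fun x => ?_)
    simp only [NNReal.smul_def, smul_eq_mul]
    rw [show ((f x).toNNReal : ℝ) = (f x).toReal from rfl]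
    ring
  -- Step 2: negative part bound
  have hmlogG : Measurable fun y => Real.log ((g y).toReal) :=
    Real.measurable_log.comp hgm.ennreal_toReal
  have hmlogF : Measurable fun x => Real.log ((f x).toReal) :=
    Real.measurable_log.comp hfm.ennreal_toReal
  set N := ∫⁻ y, ENNReal.ofReal (-Real.log ((g y).toReal)) ∂ντ with hNdef
  have hN : N ≤ 1 := by
    have step1 : N ≤ ∫⁻ y, ENNReal.ofReal (1 / (g y).toReal) ∂ντ :=
      lintegral_mono fun y => ofReal_neg_log_le ENNReal.toReal_nonneg
    have hm1 : Measurable fun y => ENNReal.ofReal (1 / (g y).toReal) :=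
      (measurable_const.div hgm.ennreal_toReal).ennreal_ofReal
    have step2 : ∫⁻ y, ENNReal.ofReal (1 / (g y).toReal) ∂ντ
        = ∫⁻ y, g y * ENNReal.ofReal (1 / (g y).toReal) ∂μ := by
      rw [← hgwd, lintegral_withDensity_eq_lintegral_mul μ hgm hm1]
      exact lintegral_congr fun y => rfl
    have step3 : ∫⁻ y, g y * ENNReal.ofReal (1 / (g y).toReal) ∂μ ≤ 1 := by
      calc ∫⁻ y, g y * ENNReal.ofReal (1 / (g y).toReal) ∂μ ≤ ∫⁻ _, 1 ∂μ := by
            refine lintegral_mono_ae ?_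
            filter_upwards [hgfin] with y hy
            rcases eq_or_ne (g y) 0 with h0 | h0
            · simp [h0]
            · have ht : 0 < (g y).toReal := ENNReal.toReal_pos h0 hy.ne
              calc g y * ENNReal.ofReal (1 / (g y).toReal)
                  = ENNReal.ofReal ((g y).toReal) * ENNReal.ofReal (1 / (g y).toReal) := by
                    rw [ENNReal.ofReal_toReal hy.ne]
                _ = ENNReal.ofReal ((g y).toReal * (1 / (g y).toReal)) :=
                    (ENNReal.ofReal_mul ENNReal.toReal_nonneg).symm
                _ = 1 := by rw [mul_one_div_cancel ht.ne']; exact ENNReal.ofReal_one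
                _ ≤ 1 := le_rfl
        _ = 1 := by simp
    exact le_trans step1 (le_trans step2.le step3)
  -- Step 3: pointwise inequality
  have hptws : ∀ᵐ z : Ω × Ω ∂γ, (f z.1).toReal * Real.log ((g z.2).toReal)
      ≤ Real.log ((f z.1).toReal) * (f z.1).toReal - (f z.1).toReal + (g z.2).toReal := by
    filter_upwards [hzero, hgae] with z hz hglt
    refine real_key ENNReal.toReal_nonneg ENNReal.toReal_nonneg fun hv => ?_
    have hg0 : g z.2 = 0 := by
      by_contra h0
      exact (ENNReal.toReal_pos h0 hglt.ne).ne' hv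
    rw [hz hg0]
    simp
  -- Step 4: positive part bound
  set P := ∫⁻ y, ENNReal.ofReal (Real.log ((g y).toReal)) ∂ντ with hPdef
  have hPT : P = ∫⁻ z : Ω × Ω, f z.1 * ENNReal.ofReal (Real.log ((g z.2).toReal)) ∂γ :=
    T1 _ hmlogG.ennreal_ofReal
  have hNT : N = ∫⁻ z : Ω × Ω, f z.1 * ENNReal.ofReal (-Real.log ((g z.2).toReal)) ∂γ :=
    T1 _ hmlogG.neg.ennreal_ofReal
  have habs_m : Measurable fun x => ENNReal.ofReal |Real.log ((f x).toReal) * (f x).toReal| :=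
    ((hmlogF.mul hfm.ennreal_toReal).abs).ennreal_ofReal
  have hC1 : ∫⁻ z : Ω × Ω, ENNReal.ofReal |Real.log ((f z.1).toReal) * (f z.1).toReal| ∂γ
      = ∫⁻ x, ENNReal.ofReal |Real.log ((f x).toReal) * (f x).toReal| ∂π := by
    rw [← hfst, lintegral_map habs_m measurable_fst]
  have hC1fin : (∫⁻ x, ENNReal.ofReal |Real.log ((f x).toReal) * (f x).toReal| ∂π) ≠ ⊤ := by
    have h := hInt1.hasFiniteIntegral
    unfold HasFiniteIntegral at h
    simp_rw [Real.enorm_eq_ofReal_abs] at h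
    exact h.ne
  have hGbound : ∫⁻ z : Ω × Ω, ENNReal.ofReal ((g z.2).toReal) ∂γ ≤ 1 := by
    calc ∫⁻ z : Ω × Ω, ENNReal.ofReal ((g z.2).toReal) ∂γ ≤ ∫⁻ z : Ω × Ω, g z.2 ∂γ :=
          lintegral_mono fun z => ENNReal.ofReal_toReal_le
      _ = ∫⁻ y, g y ∂μ := by rw [← hsnd, lintegral_map hgm measurable_snd]
      _ = ντ Set.univ := by
          rw [← hgwd, withDensity_apply _ MeasurableSet.univ, Measure.restrict_univ]
      _ = 1 := measure_univ
  have hP : P ≠ ⊤ := by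
    have hbound : ∀ᵐ z : Ω × Ω ∂γ, f z.1 * ENNReal.ofReal (Real.log ((g z.2).toReal))
        ≤ ENNReal.ofReal |Real.log ((f z.1).toReal) * (f z.1).toReal|
          + ENNReal.ofReal ((g z.2).toReal)
          + f z.1 * ENNReal.ofReal (-Real.log ((g z.2).toReal)) := by
      filter_upwards [hfae, hptws] with z hlt hineq
      calc f z.1 * ENNReal.ofReal (Real.log ((g z.2).toReal))
          ≤ ENNReal.ofReal ((f z.1).toReal * Real.log ((g z.2).toReal))
            + f z.1 * ENNReal.ofReal (-Real.log ((g z.2).toReal)) :=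
            ennreal_mul_ofReal_le hlt.ne _
        _ ≤ (ENNReal.ofReal |Real.log ((f z.1).toReal) * (f z.1).toReal|
              + ENNReal.ofReal ((g z.2).toReal))
            + f z.1 * ENNReal.ofReal (-Real.log ((g z.2).toReal)) := by
            gcongr
            calc ENNReal.ofReal ((f z.1).toReal * Real.log ((g z.2).toReal))
                ≤ ENNReal.ofReal (|Real.log ((f z.1).toReal) * (f z.1).toReal|
                    + (g z.2).toReal) := by
                  refine ENNReal.ofReal_le_ofReal ?_
                  have h1 := le_abs_self (Real.log ((f z.1).toReal) * (f z.1).toReal)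
                  have h2 := ENNReal.toReal_nonneg (a := f z.1)
                  linarith
              _ ≤ _ := ENNReal.ofReal_add_le
        _ = _ := by ring
    have hsum : ∫⁻ z : Ω × Ω, (ENNReal.ofReal |Real.log ((f z.1).toReal) * (f z.1).toReal|
          + ENNReal.ofReal ((g z.2).toReal)
          + f z.1 * ENNReal.ofReal (-Real.log ((g z.2).toReal))) ∂γ
        = (∫⁻ z : Ω × Ω, ENNReal.ofReal |Real.log ((f z.1).toReal) * (f z.1).toReal| ∂γ)
          + (∫⁻ z : Ω × Ω, ENNReal.ofReal ((g z.2).toReal) ∂γ)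
          + (∫⁻ z : Ω × Ω, f z.1 * ENNReal.ofReal (-Real.log ((g z.2).toReal)) ∂γ) := by
      have hma : Measurable fun z : Ω × Ω =>
          f z.1 * ENNReal.ofReal (-Real.log ((g z.2).toReal)) :=
        (hfm.comp measurable_fst).mul ((hmlogG.neg.ennreal_ofReal).comp measurable_snd)
      have hmb : Measurable fun z : Ω × Ω => ENNReal.ofReal ((g z.2).toReal) :=
        (hgm.ennreal_toReal.ennreal_ofReal).comp measurable_snd
      rw [lintegral_add_right _ hma, lintegral_add_right _ hmb]
    rw [hPT]
    refine ne_top_of_le_ne_top ?_ (lintegral_mono_ae hbound)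
    rw [hsum, hC1]
    refine ENNReal.add_ne_top.mpr ⟨ENNReal.add_ne_top.mpr ⟨hC1fin, ?_⟩, ?_⟩
    · exact (lt_of_le_of_lt hGbound ENNReal.one_lt_top).ne
    · rw [← hNT]
      exact (lt_of_le_of_lt hN ENNReal.one_lt_top).ne
  -- Step 5: integrability of llr ντ μ
  have hIntllr : Integrable (llr ντ μ) ντ := by
    refine ⟨hmlogG.aestronglyMeasurable, ?_⟩
    have hb : ∫⁻ y, (‖Real.log ((g y).toReal)‖₊ : ℝ≥0∞) ∂ντ ≤ P + N := by
      rw [hPdef, hNdef, ← lintegral_add_left hmlogG.ennreal_ofReal]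
      refine lintegral_mono fun y => ?_
      rw [← enorm_eq_nnnorm, Real.enorm_eq_ofReal_abs]
      exact ofReal_abs_le _
    exact lt_of_le_of_lt hb (ENNReal.add_lt_top.mpr
      ⟨hP.lt_top, lt_of_le_of_lt hN ENNReal.one_lt_top⟩)
  -- Step 6: integral inequality
  have hmF1 : Measurable fun z : Ω × Ω => f z.1 := hfm.comp measurable_fst
  have hfaeNN : (fun z : Ω × Ω => f z.1)
      =ᵐ[γ] fun z => ((f z.1).toNNReal : ℝ≥0∞) :=
    hfae.mono fun z hz => (ENNReal.coe_toNNReal hz.ne).symm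
  have hB2 : ∫ y, llr ντ μ y ∂ντ
      = ∫ z : Ω × Ω, (f z.1).toReal * Real.log ((g z.2).toReal) ∂γ := by
    have h1 : ∫ y, llr ντ μ y ∂ντ = ∫ z : Ω × Ω, Real.log ((g z.2).toReal) ∂γν := by
      show ∫ y, Real.log ((g y).toReal) ∂ντ = _
      rw [hντ, integral_map measurable_snd.aemeasurable hmlogG.aestronglyMeasurable]
    have hwd2 : γν = γ.withDensity (fun z => ((f z.1).toNNReal : ℝ≥0∞)) := by
      rw [hγν]; exact withDensity_congr_ae hfaeNN
    have hmNN : Measurable fun z : Ω × Ω => (f z.1).toNNReal := hmF1.ennreal_toNNReal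
    rw [h1, hwd2, integral_withDensity_eq_integral_smul hmNN
      (fun z : Ω × Ω => Real.log ((g z.2).toReal))]
    refine integral_congr_ae (Filter.Eventually.of_forall fun z => ?_)
    simp only [NNReal.smul_def, smul_eq_mul]
    rw [show ((f z.1).toNNReal : ℝ) = (f z.1).toReal from rfl]
  have hILHS : Integrable (fun z : Ω × Ω => (f z.1).toReal * Real.log ((g z.2).toReal)) γ := by
    have h0 : Integrable (fun y => Real.log ((g y).toReal)) ντ := hIntllr
    rw [hντ, integrable_map_measure hmlogG.aestronglyMeasurable
      measurable_snd.aemeasurable] at h0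
    rw [hγν, integrable_withDensity_iff hmF1 hfae] at h0
    refine h0.congr (Filter.Eventually.of_forall fun z => ?_)
    simp [Function.comp, mul_comm]
  have hI1 : Integrable (fun z : Ω × Ω => Real.log ((f z.1).toReal) * (f z.1).toReal) γ := by
    have h := hInt1
    rw [← hfst] at h
    exact (integrable_map_measure
      ((hmlogF.mul hfm.ennreal_toReal).aestronglyMeasurable)
      measurable_fst.aemeasurable).mp h
  have hFπ : Integrable (fun x => (f x).toReal) π :=
    integrable_toReal_of_lintegral_ne_top hfm.aemeasurable
      (Measure.lintegral_rnDeriv_lt_top ν π).ne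
  have hI2 : Integrable (fun z : Ω × Ω => (f z.1).toReal) γ := by
    have h := hFπ
    rw [← hfst] at h
    exact (integrable_map_measure hfm.ennreal_toReal.aestronglyMeasurable
      measurable_fst.aemeasurable).mp h
  have hGμ : Integrable (fun y => (g y).toReal) μ :=
    integrable_toReal_of_lintegral_ne_top hgm.aemeasurable
      (Measure.lintegral_rnDeriv_lt_top ντ μ).ne
  have hI3 : Integrable (fun z : Ω × Ω => (g z.2).toReal) γ := by
    have h := hGμ
    rw [← hsnd] at h
    exact (integrable_map_measure hgm.ennreal_toReal.aestronglyMeasurable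
      measurable_snd.aemeasurable).mp h
  have hEq1 : ∫ z : Ω × Ω, Real.log ((f z.1).toReal) * (f z.1).toReal ∂γ
      = ∫ x, Real.log ((f x).toReal) * (f x).toReal ∂π := by
    rw [← hfst, integral_map (f := fun x => Real.log ((f x).toReal) * (f x).toReal) measurable_fst.aemeasurable
      ((hmlogF.mul hfm.ennreal_toReal).aestronglyMeasurable)]
  have hEq2 : ∫ z : Ω × Ω, (f z.1).toReal ∂γ = 1 := by
    have h1 : ∫ x, (f x).toReal ∂π = 1 := by
      rw [integral_toReal hfm.aemeasurable hffin, Measure.lintegral_rnDeriv hac, measure_univ]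
      simp
    calc ∫ z : Ω × Ω, (f z.1).toReal ∂γ
        = ∫ x, (f x).toReal ∂(γ.map Prod.fst) :=
          (integral_map measurable_fst.aemeasurable
            hfm.ennreal_toReal.aestronglyMeasurable).symm
      _ = 1 := by rw [hfst]; exact h1
  have hEq3 : ∫ z : Ω × Ω, (g z.2).toReal ∂γ = 1 := by
    have h1 : ∫ y, (g y).toReal ∂μ = 1 := by
      rw [integral_toReal hgm.aemeasurable hgfin, Measure.lintegral_rnDeriv hacτ, measure_univ]
      simp
    calc ∫ z : Ω × Ω, (g z.2).toReal ∂γ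
        = ∫ y, (g y).toReal ∂(γ.map Prod.snd) :=
          (integral_map measurable_snd.aemeasurable
            hgm.ennreal_toReal.aestronglyMeasurable).symm
      _ = 1 := by rw [hsnd]; exact h1
  have hIsum : Integrable (fun z : Ω × Ω =>
      Real.log ((f z.1).toReal) * (f z.1).toReal - (f z.1).toReal + (g z.2).toReal) γ :=
    (hI1.sub hI2).add hI3
  have hfinal : ∫ z : Ω × Ω, (f z.1).toReal * Real.log ((g z.2).toReal) ∂γ
      ≤ ∫ z : Ω × Ω, (Real.log ((f z.1).toReal) * (f z.1).toReal - (f z.1).toReal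
          + (g z.2).toReal) ∂γ := integral_mono_ae hILHS hIsum hptws
  have e1 : ∫ z : Ω × Ω, (Real.log ((f z.1).toReal) * (f z.1).toReal - (f z.1).toReal
        + (g z.2).toReal) ∂γ
      = (∫ z : Ω × Ω, (Real.log ((f z.1).toReal) * (f z.1).toReal - (f z.1).toReal) ∂γ)
        + ∫ z : Ω × Ω, (g z.2).toReal ∂γ := integral_add (hI1.sub hI2) hI3
  have e2 : ∫ z : Ω × Ω, (Real.log ((f z.1).toReal) * (f z.1).toReal - (f z.1).toReal) ∂γ
      = (∫ z : Ω × Ω, Real.log ((f z.1).toReal) * (f z.1).toReal ∂γ)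
        - ∫ z : Ω × Ω, (f z.1).toReal ∂γ := integral_sub hI1 hI2
  refine ⟨hγνprob, hγνfst, hacτ, hIntllr, ?_⟩
  rw [hB2, hA]
  rw [e1, e2, hEq1, hEq2, hEq3] at hfinal
  linarith

end Helpers

lemma cost_le_of_ae {Ω : Type*} [MeasurableSpace Ω] [PseudoMetricSpace Ω] {p : ℝ} (hp0 : 0 ≤ p)
    (γ : Measure (Ω × Ω)) [IsProbabilityMeasure γ]
    {E : ℝ≥0∞} (h : ∀ᵐ z : Ω × Ω ∂γ, ENNReal.ofReal (dist z.1 z.2) ≤ E) :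
    cost p γ ≤ E ^ p := by
  rw [cost_eq hp0]
  calc ∫⁻ z : Ω × Ω, ENNReal.ofReal (dist z.1 z.2) ^ p ∂γ
      ≤ ∫⁻ _ : Ω × Ω, E ^ p ∂γ := by
        refine lintegral_mono_ae ?_
        filter_upwards [h] with z hz
        exact ENNReal.rpow_le_rpow hz hp0
    _ = E ^ p := by simp

theorem statement_3 {Ω : Type*} [MetricSpace Ω] [PolishSpace Ω] [MeasurableSpace Ω] [BorelSpace Ω]
    (p C M : ℝ) (hp1 : 1 ≤ p) (hp2 : p ≤ 2) (hC : 0 ≤ C) (hM : 0 ≤ M)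
    (μ π : Measure Ω) (hμ : MemPp p μ) (hπ : MemPp p π)
    (hWinf : Winf μ π ≠ ⊤)
    (hdef : DefTp p C M μ) :
    DefTp p C (M + 2 * (Winf μ π).toReal) π := by
  intro ν hν hKLne
  haveI hπprob : IsProbabilityMeasure π := hπ.1
  haveI hμprob : IsProbabilityMeasure μ := hμ.1
  haveI hνprob : IsProbabilityMeasure ν := hν.1
  haveI : Nonempty Ω := by
    by_contra h
    rw [not_nonempty_iff] at h
    have h1 : π Set.univ = 1 := measure_univ
    rw [Set.univ_eq_empty_iff.mpr h, measure_empty] at h1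
    exact zero_ne_one h1
  have hp0 : (0:ℝ) ≤ p := le_trans zero_le_one hp1
  have hppos : (0:ℝ) < p := lt_of_lt_of_le one_pos hp1
  have hKLif : ν ≪ π ∧ Integrable (llr ν π) ν := by
    by_contra h
    rw [KL, if_neg h] at hKLne
    exact hKLne rfl
  obtain ⟨hac, hint⟩ := hKLif
  refine le_of_forall_pos_le_add fun ε hε => ?_
  have hε4 : 0 < ε/4 := by linarith
  obtain ⟨γ₀, hγ₀prob, hγ₀c, hγ₀ess⟩ := winf_near hWinf hε4
  haveI := hγ₀prob
  set E : ℝ≥0∞ := Winf μ π + ENNReal.ofReal (ε/4) with hE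
  have hEne : E ≠ ⊤ := ENNReal.add_ne_top.mpr ⟨hWinf, ENNReal.ofReal_ne_top⟩
  have hγ₀ae : ∀ᵐ z : Ω × Ω ∂γ₀, ENNReal.ofReal (dist z.1 z.2) ≤ E := by
    filter_upwards [ae_le_essSup (fun z : Ω × Ω => ENNReal.ofReal (dist z.1 z.2))] with z hz
    exact le_trans hz hγ₀ess
  set γ : Measure (Ω × Ω) := γ₀.map Prod.swap with hγdef
  haveI : IsProbabilityMeasure γ := Measure.isProbabilityMeasure_map measurable_swap.aemeasurable
  have hγfst : γ.map Prod.fst = π := by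
    rw [hγdef, Measure.map_map measurable_fst measurable_swap]
    have h : (Prod.fst ∘ Prod.swap : Ω × Ω → Ω) = Prod.snd := rfl
    rw [h, hγ₀c.2]
  have hγsnd : γ.map Prod.snd = μ := by
    rw [hγdef, Measure.map_map measurable_snd measurable_swap]
    have h : (Prod.snd ∘ Prod.swap : Ω × Ω → Ω) = Prod.fst := rfl
    rw [h, hγ₀c.1]
  have hγae : ∀ᵐ z : Ω × Ω ∂γ, ENNReal.ofReal (dist z.1 z.2) ≤ E := by
    rw [hγdef, ae_map_iff measurable_swap.aemeasurable
      (measurableSet_le measurable_dist.ennreal_ofReal measurable_const)]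
    filter_upwards [hγ₀ae] with z hz
    simpa [dist_comm] using hz
  -- KL marginal construction
  set γν : Measure (Ω × Ω) := γ.withDensity (fun z => ν.rnDeriv π z.1) with hγνdef
  obtain ⟨hγνprob, hγνfst, hacτ, hIntτ, hKLle⟩ := kl_marginal hγfst hγsnd hac hint
  rw [← hγνdef] at hγνfst hacτ hIntτ hKLle
  haveI := hγνprob
  set ντ : Measure Ω := γν.map Prod.snd with hντdef
  haveI : IsProbabilityMeasure ντ := Measure.isProbabilityMeasure_map measurable_snd.aemeasurable
  have hγνcoup : IsCoupling γν ν ντ := ⟨hγνfst, rfl⟩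
  have hγνae : ∀ᵐ z : Ω × Ω ∂γν, ENNReal.ofReal (dist z.1 z.2) ≤ E := by
    refine Filter.Eventually.filter_mono ?_ hγae
    rw [hγνdef]
    exact (withDensity_absolutelyContinuous γ _).ae_le
  have hcostγν : cost p γν ≤ E ^ p := cost_le_of_ae hp0 γν hγνae
  have hcostγ₀ : cost p γ₀ ≤ E ^ p := cost_le_of_ae hp0 γ₀ hγ₀ae
  have hEp_ne : E ^ p ≠ ⊤ := (ENNReal.rpow_lt_top_of_nonneg hp0 hEne).ne
  have hcostγν_ne : cost p γν ≠ ⊤ := ne_top_of_le_ne_top hEp_ne hcostγν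
  have hroot : ∀ {c : Measure (Ω × Ω)}, cost p c ≤ E ^ p → (cost p c) ^ (1/p) ≤ E := by
    intro c hc
    have h := ENNReal.rpow_le_rpow hc (by positivity : (0:ℝ) ≤ 1/p)
    rwa [← ENNReal.rpow_mul, mul_one_div_cancel hppos.ne', ENNReal.rpow_one] at h
  -- MemPp ντ
  obtain ⟨x₀, hmomν⟩ := hν.2
  have hmomν' : Mom p ν x₀ ≠ ⊤ := hmomν
  have hmomντ : Mom p ντ x₀ ≠ ⊤ := mom_of_coupling hp1 hγνcoup hcostγν_ne x₀ hmomν'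
  have hντPp : MemPp p ντ := ⟨inferInstance, x₀, hmomντ⟩
  -- KL facts
  have hKLτ : KL ντ μ = ENNReal.ofReal (∫ y, llr ντ μ y ∂ντ) := by
    rw [KL, if_pos ⟨hacτ, hIntτ⟩]
  have hKLτne : KL ντ μ ≠ ⊤ := by rw [hKLτ]; exact ENNReal.ofReal_ne_top
  have hKLπ : KL ν π = ENNReal.ofReal (∫ x, llr ν π x ∂ν) := by rw [KL, if_pos ⟨hac, hint⟩]
  have hKLmono : (KL ντ μ).toReal ≤ (KL ν π).toReal := by
    refine ENNReal.toReal_mono hKLne ?_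
    rw [hKLτ, hKLπ]
    exact ENNReal.ofReal_le_ofReal hKLle
  have hWτμ := hdef ντ hντPp hKLτne
  -- nonemptiness of the coupling set for ντ, μ
  obtain ⟨x₁, hmomμ⟩ := hμ.2
  have hmomμ' : Mom p μ x₀ ≠ ⊤ := mom_point hp1 x₀ hmomμ
  obtain ⟨γpr, hγprP, hγprC, hγprF⟩ := prod_coupling hp1 x₀ hmomντ hmomμ'
  have hne : (WpSet p ντ μ).Nonempty := ⟨_, γpr, hγprP, hγprC, hγprF, rfl⟩
  obtain ⟨γα, hγαP, hγαC, hγαF, hγαlt⟩ := wp_near hne hε4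
  -- glue couplings: (ν, ντ) + (ντ, μ) + (μ, π)
  obtain ⟨γβ, hγβP, hγβC, hγβle⟩ := glue hp1 hγαP hγ₀prob hγαC hγ₀c
  obtain ⟨γφ, hγφP, hγφC, hγφle⟩ := glue hp1 hγνprob hγβP hγνcoup hγβC
  have hbig : (cost p γφ) ^ (1/p) ≤ E + ((cost p γα) ^ (1/p) + E) := by
    refine le_trans hγφle ?_
    gcongr
    · exact hroot hcostγν
    · refine le_trans hγβle ?_
      gcongr
      exact hroot hcostγ₀
  have hsum_ne : E + ((cost p γα) ^ (1/p) + E) ≠ ⊤ :=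
    ENNReal.add_ne_top.mpr ⟨hEne, ENNReal.add_ne_top.mpr ⟨rpow_inv_ne_top hp1 hγαF, hEne⟩⟩
  have hγφ_ne : cost p γφ ≠ ⊤ :=
    ne_top_of_rpow_inv hp1 (ne_top_of_le_ne_top hsum_ne hbig)
  have hWp1 : Wp p ν π ≤ ((cost p γφ) ^ (1/p)).toReal := by
    have h := wp_le_of_coupling p hγφP hγφC hγφ_ne
    exact h
  have hEtoReal : E.toReal = (Winf μ π).toReal + ε/4 := by
    rw [hE, ENNReal.toReal_add hWinf ENNReal.ofReal_ne_top, ENNReal.toReal_ofReal hε4.le]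
  have htr : ((cost p γφ) ^ (1/p)).toReal
      ≤ E.toReal + (((cost p γα) ^ (1/p)).toReal + E.toReal) := by
    calc ((cost p γφ) ^ (1/p)).toReal ≤ (E + ((cost p γα) ^ (1/p) + E)).toReal :=
        ENNReal.toReal_mono hsum_ne hbig
      _ = _ := by
        rw [ENNReal.toReal_add hEne (ENNReal.add_ne_top.mpr
          ⟨rpow_inv_ne_top hp1 hγαF, hEne⟩),
          ENNReal.toReal_add (rpow_inv_ne_top hp1 hγαF) hEne]
  have hwμτ : ((cost p γα) ^ (1/p)).toReal
      < Real.sqrt (2*C*(KL ν π).toReal) + M + ε/4 := by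
    have hWpdef : Wp p ντ μ = sInf (WpSet p ντ μ) := rfl
    have hsq : Real.sqrt (2*C*(KL ντ μ).toReal) ≤ Real.sqrt (2*C*(KL ν π).toReal) := by
      refine Real.sqrt_le_sqrt ?_
      have h2C : (0:ℝ) ≤ 2*C := by linarith
      exact mul_le_mul_of_nonneg_left hKLmono h2C
    rw [hWpdef] at hWτμ
    linarith [hγαlt]
  calc Wp p ν π ≤ ((cost p γφ) ^ (1/p)).toReal := hWp1
    _ ≤ E.toReal + (((cost p γα) ^ (1/p)).toReal + E.toReal) := htr
    _ ≤ Real.sqrt (2*C*(KL ν π).toReal) + (M + 2 * (Winf μ π).toReal) + ε := by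
      rw [hEtoReal]
      linarith [hwμτ]
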